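/- Let d be an odd positive integer and let Π_d sign = Σ_{k=0}^{d} ⟨sign, H_k⟩_γ · H_k be the degree-d Hermite truncation of the sign function. Then for every x ≥ 0, Π_d sign(x) = √(2d/π) · H_{d−1}(0) · ∫_0^x H_d(t)/t dt. (For odd d the integrand t ↦ H_d(t)/t extends continuously to t = 0 since H_d(0) = 0.) -/

import Mathlib

open MeasureTheory ProbabilityTheory Real

/-- The `k`-th normalized Hermite polynomial (as a function on `ℝ`): the monic
probabilist's Hermite polynomial divided by `√(k!)`. -/
noncomputable def normHermite (k : ℕ) (x : ℝ) : ℝ :=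
  Polynomial.aeval x (Polynomial.hermite k) / Real.sqrt (Nat.factorial k)

/-- The sign function: `1` if `x ≥ 0`, `-1` otherwise. -/
noncomputable def signFn (x : ℝ) : ℝ := if 0 ≤ x then 1 else -1

/-- The degree-`d` Hermite truncation of a function `f`:
`Π_d f = Σ_{k=0}^{d} ⟨f, H_k⟩_γ H_k`. -/
noncomputable def hermiteProj (d : ℕ) (f : ℝ → ℝ) (x : ℝ) : ℝ :=
  ∑ k ∈ Finset.range (d + 1),
    (∫ y, f y * normHermite k y ∂(gaussianReal 0 1)) * normHermite k x

open Polynomial Filter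
open scoped NNReal ENNReal

noncomputable def He (n : ℕ) (x : ℝ) : ℝ := Polynomial.aeval x (Polynomial.hermite n)

noncomputable def Gs (d : ℕ) (x : ℝ) : ℝ :=
  ∑ j ∈ Finset.range d, He j 0 * He j x / (Nat.factorial j : ℝ)

noncomputable def Fs (d : ℕ) (x : ℝ) : ℝ :=
  ∑ j ∈ Finset.range d, He j 0 * He (j+1) x / (Nat.factorial (j+1) : ℝ)

lemma hermite_deriv (n : ℕ) :
    derivative (hermite (n+1)) = C ((n:ℤ)+1) * hermite n := by
  induction n with
  | zero => simp [hermite_one, hermite_zero]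
  | succ n ih =>
    rw [hermite_succ (n+1), derivative_sub, derivative_mul, derivative_X, ih, hermite_succ n,
      derivative_mul, derivative_C]
    push_cast
    simp only [C_add, C_1, C_0, map_ofNat]
    ring

lemma he_hasDerivAt (n : ℕ) (x : ℝ) :
    HasDerivAt (fun y => He (n+1) y) (((n:ℝ)+1) * He n x) x := by
  have h := (hermite (n+1) : Polynomial ℤ).hasDerivAt_aeval (𝕜 := ℝ) x
  rw [hermite_deriv, map_mul, aeval_C] at h
  simp only [He]
  refine h.congr_deriv ?_
  push_cast
  ring

lemma he_zero (x : ℝ) : He 0 x = 1 := by simp [He, hermite_zero]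
lemma he_one (x : ℝ) : He 1 x = x := by simp [He, hermite_one]

lemma he_succ_succ (n : ℕ) (x : ℝ) :
    He (n+2) x = x * He (n+1) x - ((n:ℝ)+1) * He n x := by
  have h : (hermite (n+2) : Polynomial ℤ) = X * hermite (n+1) - C ((n:ℤ)+1) * hermite n := by
    rw [hermite_succ (n+1), hermite_deriv]
  simp only [He, h, map_sub, map_mul, aeval_X, aeval_C]
  push_cast
  ring

lemma he_neg (n : ℕ) (x : ℝ) : He n (-x) = (-1)^n * He n x := by
  induction n using Nat.twoStepInduction generalizing x with
  | zero => simp [he_zero]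
  | one => simp [he_one]
  | more n ih ih1 =>
    rw [he_succ_succ, he_succ_succ, ih, ih1]
    ring

lemma he_odd_zero {n : ℕ} (hn : Odd n) : He n 0 = 0 := by
  have := he_neg n 0
  rw [neg_zero, hn.neg_one_pow] at this
  linarith


lemma he_continuous (n : ℕ) : Continuous (fun t => He n t) := by
  simpa [He] using (hermite n : Polynomial ℤ).continuous_aeval (A := ℝ)

lemma he_rep (n : ℕ) (t : ℝ) :
    He n t = ∑ i ∈ Finset.range (n+1), (((hermite n).coeff i : ℤ) : ℝ) * t^i := by
  rw [He, Polynomial.aeval_eq_sum_range]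
  simp [Polynomial.natDegree_hermite, zsmul_eq_mul]

lemma integrable_pow_gauss (i : ℕ) :
    Integrable (fun t : ℝ => t^i * rexp (-(t^2/2))) := by
  have h := integrable_rpow_mul_exp_neg_mul_sq (b := 1/2) (by norm_num)
    (s := (i:ℝ)) (lt_of_lt_of_le neg_one_lt_zero (Nat.cast_nonneg i))
  exact h.congr (Filter.Eventually.of_forall fun t => by simp only [Real.rpow_natCast]; ring_nf)

lemma integrable_he_gauss (n : ℕ) :
    Integrable (fun t : ℝ => He n t * rexp (-(t^2/2))) := by
  have : (fun t : ℝ => He n t * rexp (-(t^2/2)))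
      = fun t => ∑ i ∈ Finset.range (n+1),
          (((hermite n).coeff i : ℤ) : ℝ) * (t^i * rexp (-(t^2/2))) := by
    funext t
    rw [he_rep, Finset.sum_mul]
    exact Finset.sum_congr rfl fun i _ => by ring
  rw [this]
  exact integrable_finset_sum _ fun i _ => (integrable_pow_gauss i).const_mul _

lemma tendsto_pow_gauss (i : ℕ) :
    Tendsto (fun t : ℝ => t^i * rexp (-(t^2/2))) atTop (nhds 0) := by
  have hexp : Tendsto (fun x : ℝ => rexp (-(1/2) * x)) atTop (nhds 0) := by
    have h2 : Tendsto (fun x : ℝ => (1/2) * x) atTop atTop :=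
      Tendsto.const_mul_atTop (by norm_num) tendsto_id
    exact (tendsto_exp_neg_atTop_nhds_zero.comp h2).congr
      (fun x => by simp [Function.comp, neg_mul])
  have h := (rpow_mul_exp_neg_mul_sq_isLittleO_exp_neg (b := 1/2) (by norm_num)
    (i:ℝ)).tendsto_zero_of_tendsto hexp
  exact h.congr (fun t => by rw [Real.rpow_natCast]; ring_nf)

lemma tendsto_he_gauss_atTop (n : ℕ) :
    Tendsto (fun t : ℝ => He n t * rexp (-(t^2/2))) atTop (nhds 0) := by
  have : (fun t : ℝ => He n t * rexp (-(t^2/2)))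
      = fun t => ∑ i ∈ Finset.range (n+1),
          (((hermite n).coeff i : ℤ) : ℝ) * (t^i * rexp (-(t^2/2))) := by
    funext t
    rw [he_rep, Finset.sum_mul]
    exact Finset.sum_congr rfl fun i _ => by ring
  rw [this]
  have := tendsto_finset_sum (Finset.range (n+1))
    (fun i _ => ((tendsto_pow_gauss i).const_mul ((((hermite n).coeff i : ℤ) : ℝ))))
  simpa using this

lemma tendsto_he_gauss_atBot (n : ℕ) :
    Tendsto (fun t : ℝ => He n t * rexp (-(t^2/2))) atBot (nhds 0) := by
  have h : Tendsto (fun t : ℝ => He n (-t) * rexp (-((-t)^2/2))) atTop (nhds 0) := by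
    have h2 := (tendsto_he_gauss_atTop n).const_mul ((-1:ℝ)^n)
    rw [mul_zero] at h2
    exact h2.congr (fun t => by rw [he_neg, neg_sq]; ring)
  have h3 := h.comp tendsto_neg_atBot_atTop
  refine h3.congr (fun t => ?_)
  simp

lemma he_antideriv (n : ℕ) (t : ℝ) :
    HasDerivAt (fun t => -(He n t * rexp (-(t^2/2))))
      (He (n+1) t * rexp (-(t^2/2))) t := by
  have hP : HasDerivAt (fun t => He n t) (aeval t (derivative (hermite n)) : ℝ) t := by
    simpa [He] using (hermite n : Polynomial ℤ).hasDerivAt_aeval (𝕜 := ℝ) t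
  have hE : HasDerivAt (fun t : ℝ => rexp (-(t^2/2))) (-t * rexp (-(t^2/2))) t := by
    have h1 : HasDerivAt (fun t : ℝ => -(t^2/2)) (-t) t := by
      exact (((hasDerivAt_pow 2 t).div_const 2).neg).congr_deriv (by norm_num)
    simpa [mul_comm] using h1.exp
  have := (hP.mul hE).neg
  have hval : He (n+1) t = t * He n t - aeval t (derivative (hermite n)) := by
    simp [He, hermite_succ n, mul_comm]
  refine this.congr_deriv ?_
  rw [hval]
  ring

lemma integral_Ioi_he (n : ℕ) :
    ∫ t in Set.Ioi (0:ℝ), He (n+1) t * rexp (-(t^2/2)) = He n 0 := by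
  have h := integral_Ioi_of_hasDerivAt_of_tendsto
    (f := fun t => -(He n t * rexp (-(t^2/2))))
    (f' := fun t => He (n+1) t * rexp (-(t^2/2))) (a := 0) (m := 0)
    (Continuous.continuousWithinAt (by
      exact ((he_continuous n).mul (Real.continuous_exp.comp (by continuity))).neg))
    (fun x _ => he_antideriv n x)
    ((integrable_he_gauss (n+1)).integrableOn)
    (by simpa using (tendsto_he_gauss_atTop n).neg)
  simpa using h


lemma integral_Iic_he (n : ℕ) :
    ∫ t in Set.Iic (0:ℝ), He (n+1) t * rexp (-(t^2/2)) = -He n 0 := by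
  have h1 := integral_comp_neg_Iic (0:ℝ) (fun t => He (n+1) (-t) * rexp (-((-t)^2/2)))
  simp only [neg_neg, neg_zero] at h1
  rw [h1]
  have h2 : ∀ t : ℝ, He (n+1) (-t) * rexp (-((-t)^2/2))
      = (-1)^(n+1) * (He (n+1) t * rexp (-(t^2/2))) := fun t => by
    rw [he_neg, neg_sq]; ring
  simp_rw [h2]
  rw [MeasureTheory.integral_const_mul, integral_Ioi_he]
  rcases Nat.even_or_odd n with he | ho
  · rw [Even.add_one he |>.neg_one_pow]
    ring
  · rw [he_odd_zero ho]
    ring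

lemma measurable_signFn : Measurable signFn :=
  Measurable.ite (measurableSet_le measurable_const measurable_id)
    measurable_const measurable_const

lemma abs_signFn (y : ℝ) : |signFn y| = 1 := by
  rcases le_or_gt 0 y with h | h
  · simp [signFn, h]
  · simp [signFn, not_le.mpr h]

lemma integrable_sign_he_gauss (n : ℕ) :
    Integrable (fun y : ℝ => signFn y * (He n y * rexp (-(y^2/2)))) := by
  refine (integrable_he_gauss n).abs.mono' ?_ ?_
  · exact (measurable_signFn.mul
      ((he_continuous n).measurable.mul (by measurability))).aestronglyMeasurable
  · refine Filter.Eventually.of_forall fun y => ?_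
    rw [Real.norm_eq_abs, abs_mul, abs_signFn, one_mul]

lemma integral_sign_he (n : ℕ) :
    ∫ y : ℝ, signFn y * (He (n+1) y * rexp (-(y^2/2))) = 2 * He n 0 := by
  have hint := integrable_sign_he_gauss (n+1)
  rw [← intervalIntegral.integral_Iic_add_Ioi (b := (0:ℝ)) hint.integrableOn hint.integrableOn]
  have hIoi : ∫ y in Set.Ioi (0:ℝ), signFn y * (He (n+1) y * rexp (-(y^2/2)))
      = ∫ y in Set.Ioi (0:ℝ), He (n+1) y * rexp (-(y^2/2)) := by
    refine setIntegral_congr_fun measurableSet_Ioi fun y hy => ?_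
    have : (0:ℝ) ≤ y := le_of_lt hy
    simp [signFn, this]
  have hIic : ∫ y in Set.Iic (0:ℝ), signFn y * (He (n+1) y * rexp (-(y^2/2)))
      = ∫ y in Set.Iic (0:ℝ), -(He (n+1) y * rexp (-(y^2/2))) := by
    refine setIntegral_congr_ae measurableSet_Iic ?_
    have h0 : ∀ᵐ y : ℝ, y ≠ 0 := by
      rw [ae_iff]
      simpa using Real.volume_singleton
    filter_upwards [h0] with y hy hmem
    have hlt : y < 0 := lt_of_le_of_ne hmem hy
    simp [signFn, not_le.mpr hlt]
  rw [hIoi, hIic, integral_neg, integral_Iic_he, integral_Ioi_he]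
  ring

lemma integral_sign_one :
    ∫ y : ℝ, signFn y * ((1:ℝ) * rexp (-(y^2/2))) = 0 := by
  have hint : Integrable (fun y : ℝ => signFn y * ((1:ℝ) * rexp (-(y^2/2)))) := by
    have := integrable_sign_he_gauss 0
    simpa [He, hermite_zero] using this
  rw [← intervalIntegral.integral_Iic_add_Ioi (b := (0:ℝ)) hint.integrableOn hint.integrableOn]
  have hIoi : ∫ y in Set.Ioi (0:ℝ), signFn y * ((1:ℝ) * rexp (-(y^2/2)))
      = ∫ y in Set.Ioi (0:ℝ), rexp (-(y^2/2)) := by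
    refine setIntegral_congr_fun measurableSet_Ioi fun y hy => ?_
    have : (0:ℝ) ≤ y := le_of_lt hy
    simp [signFn, this]
  have hIic : ∫ y in Set.Iic (0:ℝ), signFn y * ((1:ℝ) * rexp (-(y^2/2)))
      = ∫ y in Set.Iic (0:ℝ), -rexp (-(y^2/2)) := by
    refine setIntegral_congr_ae measurableSet_Iic ?_
    have h0 : ∀ᵐ y : ℝ, y ≠ 0 := by
      rw [ae_iff]
      simpa using Real.volume_singleton
    filter_upwards [h0] with y hy hmem
    have hlt : y < 0 := lt_of_le_of_ne hmem hy
    simp [signFn, not_le.mpr hlt]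
  have hsym : ∫ y in Set.Iic (0:ℝ), rexp (-(y^2/2))
      = ∫ y in Set.Ioi (0:ℝ), rexp (-(y^2/2)) := by
    have := integral_comp_neg_Iic (0:ℝ) (fun t => rexp (-(t^2/2)))
    simp only [neg_sq, neg_zero] at this
    rw [← this]
  rw [hIoi, hIic, integral_neg, hsym]
  ring


lemma integral_gaussianReal_eq (f : ℝ → ℝ) :
    ∫ y, f y ∂(gaussianReal 0 1) = ∫ y, gaussianPDFReal 0 1 y * f y := by
  rw [gaussianReal_of_var_ne_zero 0 one_ne_zero]
  rw [show (gaussianPDF 0 1) = fun x => ((Real.toNNReal (gaussianPDFReal 0 1 x) : ℝ≥0) : ℝ≥0∞)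
    from rfl]
  rw [integral_withDensity_eq_integral_smul (measurable_gaussianPDFReal 0 1).real_toNNReal f]
  congr 1
  funext y
  rw [NNReal.smul_def, Real.coe_toNNReal _ (gaussianPDFReal_nonneg 0 1 y), smul_eq_mul]

lemma gaussianPDFReal_01 (y : ℝ) :
    gaussianPDFReal 0 1 y = (Real.sqrt (2*π))⁻¹ * rexp (-(y^2/2)) := by
  simp [gaussianPDFReal, neg_div]

lemma sqrt_two_div_pi : Real.sqrt (2/π) = 2 / Real.sqrt (2*π) := by
  have h2π : (0:ℝ) < 2*π := by positivity
  have h : (2 / Real.sqrt (2*π))^2 = 2/π := by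
    rw [div_pow, Real.sq_sqrt h2π.le]
    field_simp
  rw [← h, Real.sqrt_sq (by positivity)]

lemma I_succ (k : ℕ) : ∫ y, signFn y * normHermite (k+1) y ∂(gaussianReal 0 1)
    = Real.sqrt (2/π) * He k 0 / Real.sqrt (Nat.factorial (k+1)) := by
  rw [integral_gaussianReal_eq]
  have : ∀ y : ℝ, gaussianPDFReal 0 1 y * (signFn y * normHermite (k+1) y)
      = ((Real.sqrt (2*π))⁻¹ / Real.sqrt (Nat.factorial (k+1)))
          * (signFn y * (He (k+1) y * rexp (-(y^2/2)))) := by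
    intro y
    rw [gaussianPDFReal_01, normHermite]
    show _ = _ * (_ * (He (k+1) y * _))
    rw [He]
    ring
  simp_rw [this]
  rw [MeasureTheory.integral_const_mul, integral_sign_he, sqrt_two_div_pi]
  ring

lemma I_zero : ∫ y, signFn y * normHermite 0 y ∂(gaussianReal 0 1) = 0 := by
  rw [integral_gaussianReal_eq]
  have : ∀ y : ℝ, gaussianPDFReal 0 1 y * (signFn y * normHermite 0 y)
      = (Real.sqrt (2*π))⁻¹ * (signFn y * ((1:ℝ) * rexp (-(y^2/2)))) := by
    intro y
    rw [gaussianPDFReal_01, normHermite]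
    simp [Polynomial.hermite_zero]
    ring
  simp_rw [this]
  rw [MeasureTheory.integral_const_mul, integral_sign_one, mul_zero]

lemma proj_eq (d : ℕ) (x : ℝ) : hermiteProj d signFn x
    = Real.sqrt (2/π) * ∑ j ∈ Finset.range d,
        He j 0 * He (j+1) x / (Nat.factorial (j+1) : ℝ) := by
  rw [hermiteProj, Finset.sum_range_succ']
  rw [I_zero, zero_mul, add_zero, Finset.mul_sum]
  refine Finset.sum_congr rfl fun j _ => ?_
  rw [I_succ]
  have hnn : (0:ℝ) ≤ (Nat.factorial (j+1) : ℝ) := by positivity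
  have hss : Real.sqrt (Nat.factorial (j+1)) * Real.sqrt (Nat.factorial (j+1))
      = (Nat.factorial (j+1) : ℝ) := Real.mul_self_sqrt hnn
  have hpos : (0:ℝ) < Real.sqrt (Nat.factorial (j+1)) := by
    refine Real.sqrt_pos.mpr ?_
    exact_mod_cast Nat.factorial_pos (j+1)
  rw [normHermite, ← He, div_mul_div_comm, hss]
  ring


lemma cd (n : ℕ) (x : ℝ) :
    x * Gs (n+1) x = (He (n+1) x * He n 0 - He n x * He (n+1) 0) / (Nat.factorial n : ℝ) := by
  induction n with
  | zero => simp [Gs, he_zero, he_one]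
  | succ n ih =>
    have hfac : ((Nat.factorial n : ℝ)) ≠ 0 := by
      exact_mod_cast (Nat.factorial_pos n).ne'
    have hfs : ((Nat.factorial (n+1) : ℝ)) = ((n:ℝ)+1) * (Nat.factorial n : ℝ) := by
      rw [Nat.factorial_succ]; push_cast; ring
    rw [Gs, Finset.sum_range_succ, ← Gs, mul_add, ih, he_succ_succ n x, he_succ_succ n 0, hfs]
    field_simp
    ring

lemma fs_zero (d : ℕ) : Fs d 0 = 0 := by
  rw [Fs]
  refine Finset.sum_eq_zero fun j _ => ?_
  rcases Nat.even_or_odd j with hj | hj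
  · rw [he_odd_zero (hj.add_one), mul_zero, zero_div]
  · rw [he_odd_zero hj, zero_mul, zero_div]

lemma fs_hasDerivAt (d : ℕ) (x : ℝ) : HasDerivAt (fun y => Fs d y) (Gs d x) x := by
  have h : ∀ j ∈ Finset.range d, HasDerivAt
      (fun y => He j 0 / (Nat.factorial (j+1) : ℝ) * He (j+1) y)
      (He j 0 * He j x / (Nat.factorial j : ℝ)) x := by
    intro j _
    have hfs : ((Nat.factorial (j+1) : ℝ)) = ((j:ℝ)+1) * (Nat.factorial j : ℝ) := by
      rw [Nat.factorial_succ]; push_cast; ring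
    have hfac : ((Nat.factorial j : ℝ)) ≠ 0 := by
      exact_mod_cast (Nat.factorial_pos j).ne'
    have := (he_hasDerivAt j x).const_mul (He j 0 / (Nat.factorial (j+1) : ℝ))
    refine this.congr_deriv ?_
    rw [hfs]
    field_simp
  have hsum := HasDerivAt.fun_sum h
  have heq : (fun y => ∑ j ∈ Finset.range d, He j 0 / (Nat.factorial (j+1):ℝ) * He (j+1) y)
      = fun y => Fs d y := by
    funext y
    unfold Fs
    exact Finset.sum_congr rfl fun j _ => by ring
  rw [heq] at hsum
  exact hsum

lemma gs_continuous (d : ℕ) : Continuous (fun y => Gs d y) := by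
  refine continuous_finset_sum _ fun j _ => ?_
  exact (continuous_const.mul (he_continuous j)).div_const _

lemma ftc (d : ℕ) (x : ℝ) : ∫ t in (0:ℝ)..x, Gs d t = Fs d x := by
  have h := intervalIntegral.integral_eq_sub_of_hasDerivAt
    (f := fun y => Fs d y) (f' := fun y => Gs d y) (a := 0) (b := x)
    (fun t _ => fs_hasDerivAt d t)
    ((gs_continuous d).intervalIntegrable 0 x)
  rw [h]
  show Fs d x - Fs d 0 = Fs d x
  rw [fs_zero, sub_zero]


theorem stmt_8 (d : ℕ) (hd : Odd d) (x : ℝ) (hx : 0 ≤ x) :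
    hermiteProj d signFn x
      = Real.sqrt (2 * d / π) * normHermite (d - 1) 0
          * ∫ t in (0 : ℝ)..x, normHermite d t / t := by
  obtain ⟨n, rfl⟩ : ∃ n, d = n + 1 := ⟨d - 1, (Nat.succ_pred_eq_of_pos hd.pos).symm⟩
  have hd0 : He (n+1) 0 = 0 := he_odd_zero hd
  have hfacpos : (0:ℝ) < (Nat.factorial n : ℝ) := by exact_mod_cast Nat.factorial_pos n
  set c : ℝ := Real.sqrt (2 * ((n+1 : ℕ) : ℝ) / π) * normHermite ((n+1) - 1) 0 with hc
  set K : ℝ := Real.sqrt (2 * ((n+1 : ℕ) : ℝ) / π) * (Nat.factorial n : ℝ)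
      / (Real.sqrt (Nat.factorial n) * Real.sqrt (Nat.factorial (n+1))) with hK
  have hrhs : c * ∫ t in (0 : ℝ)..x, normHermite (n+1) t / t = K * Fs (n+1) x := by
    rw [← intervalIntegral.integral_const_mul c (fun t => normHermite (n+1) t / t),
      ← ftc, ← intervalIntegral.integral_const_mul K (fun t => Gs (n+1) t)]
    refine intervalIntegral.integral_congr_ae ?_
    have h0 : ∀ᵐ t : ℝ, t ≠ 0 := by
      rw [ae_iff]
      simpa using Real.volume_singleton
    filter_upwards [h0] with t ht hmem
    have hcd : He (n+1) t * He n 0 = t * Gs (n+1) t * (Nat.factorial n : ℝ) := by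
      have h1 := cd n t
      rw [hd0, mul_zero, sub_zero] at h1
      rw [eq_div_iff hfacpos.ne'] at h1
      linarith [h1]
    show c * (normHermite (n+1) t / t) = K * Gs (n+1) t
    rw [hc, show (n+1) - 1 = n from rfl, normHermite, ← He, normHermite, ← He]
    have expand : Real.sqrt (2 * ((n+1 : ℕ) : ℝ) / π) * (He n 0 / Real.sqrt (Nat.factorial n))
          * (He (n+1) t / Real.sqrt (Nat.factorial (n+1)) / t)
        = Real.sqrt (2 * ((n+1 : ℕ) : ℝ) / π)
            / (Real.sqrt (Nat.factorial n) * Real.sqrt (Nat.factorial (n+1)))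
            * (He (n+1) t * He n 0 / t) := by ring
    rw [expand, hcd, show t * Gs (n+1) t * (Nat.factorial n : ℝ) / t
      = Gs (n+1) t * (Nat.factorial n : ℝ) from by field_simp, hK]
    ring
  have hKval : K = Real.sqrt (2/π) := by
    rw [hK]
    have e1 : (Nat.factorial (n+1) : ℝ) = ((n:ℝ)+1) * (Nat.factorial n : ℝ) := by
      rw [Nat.factorial_succ]; push_cast; ring
    have e2 : 2 * ((n+1 : ℕ) : ℝ) / π = (2/π) * ((n:ℝ)+1) := by push_cast; ring
    rw [e1, e2, Real.sqrt_mul (by positivity) ((n:ℝ)+1),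
      Real.sqrt_mul (by positivity) (Nat.factorial n : ℝ)]
    have hss : Real.sqrt (Nat.factorial n : ℝ) * Real.sqrt (Nat.factorial n : ℝ)
        = (Nat.factorial n : ℝ) := Real.mul_self_sqrt hfacpos.le
    rw [show Real.sqrt (Nat.factorial n : ℝ) * (Real.sqrt ((n:ℝ)+1)
        * Real.sqrt (Nat.factorial n : ℝ))
      = Real.sqrt ((n:ℝ)+1) * (Real.sqrt (Nat.factorial n : ℝ)
        * Real.sqrt (Nat.factorial n : ℝ)) from by ring, hss]
    rw [show Real.sqrt (2/π) * Real.sqrt ((n:ℝ)+1) * (Nat.factorial n : ℝ)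
      = Real.sqrt (2/π) * (Real.sqrt ((n:ℝ)+1) * (Nat.factorial n : ℝ)) from by ring]
    rw [mul_div_assoc, div_self (by positivity), mul_one]
  calc hermiteProj (n+1) signFn x
      = Real.sqrt (2/π) * Fs (n+1) x := proj_eq (n+1) x
    _ = K * Fs (n+1) x := by rw [hKval]
    _ = c * ∫ t in (0 : ℝ)..x, normHermite (n+1) t / t := hrhs.symm
    _ = Real.sqrt (2 * ((n+1 : ℕ) : ℝ) / π) * normHermite ((n+1) - 1) 0
          * ∫ t in (0 : ℝ)..x, normHermite (n+1) t / t := by rw [hc]
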